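/- There exist degradable CPT channels Φ: M_{d_A} → M_{d_B} whose minimal environment dimension (Choi rank) d_E exceeds d_B. Specifically, if N: M_d → M_d has Choi rank d², then Φ(ρ) = ½|0⟩⟨0|⊗ρ + ½|1⟩⟨1|⊗N(ρ) is degradable with output dimension d_B = 2d and Choi rank d_E = d²+1 > 2d when d ≥ 3. -/

import Mathlib

open Matrix Kronecker BigOperators ComplexOrder

noncomputable def krausMap {n m ι : Type*} [Fintype n] [Fintype ι]
    (A : ι → Matrix m n ℂ) : Matrix n n ℂ →ₗ[ℂ] Matrix m m ℂ where
  toFun ρ := ∑ k, A k * ρ * (A k)ᴴ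
  map_add' ρ σ := by
    simp [Matrix.mul_add, Matrix.add_mul, Finset.sum_add_distrib]
  map_smul' c ρ := by
    simp [Matrix.mul_smul, Matrix.smul_mul, Finset.smul_sum]

noncomputable def complementMap {n m ι : Type*} [Fintype n] [Fintype m] [Fintype ι]
    (A : ι → Matrix m n ℂ) : Matrix n n ℂ →ₗ[ℂ] Matrix ι ι ℂ where
  toFun ρ := Matrix.of fun j k => (A j * ρ * (A k)ᴴ).trace
  map_add' ρ σ := by
    ext j k
    simp [Matrix.mul_add, Matrix.add_mul]
  map_smul' c ρ := by
    ext j k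
    simp [Matrix.mul_smul, Matrix.smul_mul]

noncomputable def choi {n m : Type*} [Fintype n] [DecidableEq n]
    (Φ : Matrix n n ℂ →ₗ[ℂ] Matrix m m ℂ) : Matrix (n × m) (n × m) ℂ :=
  Matrix.of fun p q => Φ (Matrix.single p.1 q.1 1) p.2 q.2

def IsCPTP {n m : Type*} [Fintype n] [DecidableEq n] [Fintype m]
    (Φ : Matrix n n ℂ →ₗ[ℂ] Matrix m m ℂ) : Prop :=
  (choi Φ).PosSemidef ∧ ∀ ρ, (Φ ρ).trace = ρ.trace

def IsKrausRep {n m ι : Type*} [Fintype n] [DecidableEq n] [Fintype m] [Fintype ι]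
    (A : ι → Matrix m n ℂ) (Φ : Matrix n n ℂ →ₗ[ℂ] Matrix m m ℂ) : Prop :=
  (∀ ρ, Φ ρ = ∑ k, A k * ρ * (A k)ᴴ) ∧ ∑ k, (A k)ᴴ * A k = 1

def Degradable {n m : Type*} [Fintype n] [DecidableEq n] [Fintype m] [DecidableEq m]
    (Φ : Matrix n n ℂ →ₗ[ℂ] Matrix m m ℂ) : Prop :=
  ∃ (e : ℕ) (A : Fin e → Matrix m n ℂ), IsKrausRep A Φ ∧
    ∃ Ψ : Matrix m m ℂ →ₗ[ℂ] Matrix (Fin e) (Fin e) ℂ,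
      IsCPTP Ψ ∧ Ψ ∘ₗ Φ = complementMap A

def AntiDegradable {n m : Type*} [Fintype n] [DecidableEq n] [Fintype m] [DecidableEq m]
    (Φ : Matrix n n ℂ →ₗ[ℂ] Matrix m m ℂ) : Prop :=
  ∃ (e : ℕ) (A : Fin e → Matrix m n ℂ), IsKrausRep A Φ ∧
    ∃ Λ : Matrix (Fin e) (Fin e) ℂ →ₗ[ℂ] Matrix m m ℂ,
      IsCPTP Λ ∧ Λ ∘ₗ complementMap A = Φ

/-- Kraus operators of the flagged channel `Φ(ρ) = ½|0⟩⟨0|⊗ρ + ½|1⟩⟨1|⊗N(ρ)`. -/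
noncomputable def bigA {d f : ℕ} (B : Fin f → Matrix (Fin d) (Fin d) ℂ) :
    Fin (f + 1) → Matrix (Fin 2 × Fin d) (Fin d) ℂ :=
  Fin.cases
    (Matrix.of fun p j => if p.1 = 0 ∧ p.2 = j then (Real.sqrt 2 : ℂ)⁻¹ else 0)
    (fun k => Matrix.of fun p j => if p.1 = 1 then (Real.sqrt 2 : ℂ)⁻¹ * B k p.2 j else 0)

lemma std_sandwich {n m : Type*} [Fintype n] [DecidableEq n] (A B : Matrix m n ℂ)
    (p q : n) (u v : m) :
    (A * Matrix.single p q (1 : ℂ) * Bᴴ) u v = A u p * star (B v q) := by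
  simp [Matrix.mul_apply, Matrix.single, Matrix.conjTranspose_apply, ite_and,
    Finset.sum_ite_eq, Finset.mul_sum, mul_comm, mul_assoc, mul_left_comm]

noncomputable def vecOf {n m ι : Type*} (A : ι → Matrix m n ℂ) :
    Matrix ι (n × m) ℂ := Matrix.of fun k p => star (A k p.2 p.1)

lemma choi_krausMap {n m ι : Type*} [Fintype n] [DecidableEq n] [Fintype ι]
    (A : ι → Matrix m n ℂ) :
    choi (krausMap A) = (vecOf A)ᴴ * vecOf A := by
  ext ⟨p, u⟩ ⟨q, v⟩
  simp only [choi, krausMap, Matrix.of_apply, LinearMap.coe_mk, AddHom.coe_mk,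
    Matrix.sum_apply, Matrix.mul_apply, Matrix.conjTranspose_apply, vecOf]
  refine Finset.sum_congr rfl fun k _ => ?_
  rw [show ∑ j, (∑ i, A k u i * Matrix.single p q (1:ℂ) i j) * star (A k v j)
      = (A k * Matrix.single p q (1:ℂ) * (A k)ᴴ) u v by
    simp [Matrix.mul_apply, Matrix.conjTranspose_apply], std_sandwich]
  simp

lemma isCPTP_krausMap {n m ι : Type*} [Fintype n] [DecidableEq n] [Fintype m] [Fintype ι]
    (A : ι → Matrix m n ℂ) (h : ∑ k, (A k)ᴴ * A k = 1) : IsCPTP (krausMap A) := by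
  constructor
  · rw [choi_krausMap]; exact Matrix.posSemidef_conjTranspose_mul_self _
  · intro ρ
    show Matrix.trace (∑ k, A k * ρ * (A k)ᴴ) = ρ.trace
    rw [Matrix.trace_sum]
    calc ∑ k, (A k * ρ * (A k)ᴴ).trace = ∑ k, ((A k)ᴴ * A k * ρ).trace := by
          refine Finset.sum_congr rfl fun k _ => ?_
          rw [Matrix.trace_mul_cycle]
    _ = ρ.trace := by
          rw [← Matrix.trace_sum, ← Finset.sum_mul, h, Matrix.one_mul]

lemma rank_choi_krausMap {n m : Type*} [Fintype n] [DecidableEq n] [Fintype m] {e : ℕ}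
    (A : Fin e → Matrix m n ℂ) (h : LinearIndependent ℂ A) :
    (choi (krausMap A)).rank = e := by
  rw [choi_krausMap, Matrix.rank_conjTranspose_mul_self, ← Matrix.rank_conjTranspose]
  have hinj : Function.Injective ((vecOf A)ᴴ.mulVecLin) := by
    rw [← LinearMap.ker_eq_bot, LinearMap.ker_eq_bot']
    intro c hc
    have hc' : ∀ p : n × m, ∑ k, A k p.2 p.1 * c k = 0 := by
      intro p
      have := congrFun hc p
      simpa [Matrix.mulVecLin_apply, Matrix.mulVec, dotProduct,
        Matrix.conjTranspose_apply, vecOf] using this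
    have hz : ∑ k, c k • A k = 0 := by
      ext u v
      simpa [Matrix.sum_apply, mul_comm] using hc' (v, u)
    funext k
    exact Fintype.linearIndependent_iff.mp h c hz k
  rw [Matrix.rank, LinearMap.finrank_range_of_inj hinj]
  simp

lemma s2_conj : (starRingEnd ℂ) (Real.sqrt 2 : ℂ)⁻¹ = (Real.sqrt 2 : ℂ)⁻¹ := by
  rw [map_inv₀, Complex.conj_ofReal]

lemma s2_sq : (Real.sqrt 2 : ℂ)⁻¹ * (Real.sqrt 2 : ℂ)⁻¹ = (2 : ℂ)⁻¹ := by
  rw [← mul_inv, ← Complex.ofReal_mul, Real.mul_self_sqrt (by norm_num)]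
  norm_num

lemma s2_sq' (x : ℂ) : (Real.sqrt 2 : ℂ)⁻¹ * ((Real.sqrt 2 : ℂ)⁻¹ * x) = (2 : ℂ)⁻¹ * x := by
  rw [← mul_assoc, s2_sq]

lemma s2_ne : (Real.sqrt 2 : ℂ)⁻¹ ≠ 0 := by
  simp [Real.sqrt_eq_zero', Complex.ofReal_eq_zero]

lemma conj_bigA_zero {d f : ℕ} (B : Fin f → Matrix (Fin d) (Fin d) ℂ) :
    (bigA B 0)ᴴ * (bigA B 0) = (2 : ℂ)⁻¹ • 1 := by
  ext i j
  simp [bigA, Matrix.mul_apply, Matrix.conjTranspose_apply, Fintype.sum_prod_type,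
    Fin.sum_univ_two, ite_and, apply_ite, s2_conj, Matrix.one_apply]
  by_cases h : i = j <;> simp [h, Finset.sum_ite_eq, s2_sq, eq_comm]

lemma conj_bigA_succ {d f : ℕ} (B : Fin f → Matrix (Fin d) (Fin d) ℂ) (k : Fin f) :
    (bigA B k.succ)ᴴ * (bigA B k.succ) = (2 : ℂ)⁻¹ • ((B k)ᴴ * B k) := by
  ext i j
  simp [bigA, Matrix.mul_apply, Matrix.conjTranspose_apply, Fintype.sum_prod_type,
    Fin.sum_univ_two, s2_conj, Finset.mul_sum, mul_comm, mul_assoc, mul_left_comm, s2_sq,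
    s2_sq']

lemma sum_conj_bigA {d f : ℕ} (B : Fin f → Matrix (Fin d) (Fin d) ℂ)
    (h : ∑ k, (B k)ᴴ * B k = 1) :
    ∑ k, (bigA B k)ᴴ * (bigA B k) = 1 := by
  rw [Fin.sum_univ_succ, conj_bigA_zero]
  simp only [conj_bigA_succ, ← Finset.smul_sum, h]
  rw [← smul_add, ← two_smul ℂ (1 : Matrix (Fin d) (Fin d) ℂ), smul_smul]
  norm_num

lemma bigA_linearIndependent {d f : ℕ} (hd : 0 < d) (B : Fin f → Matrix (Fin d) (Fin d) ℂ)
    (h : LinearIndependent ℂ B) : LinearIndependent ℂ (bigA B) := by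
  rw [Fintype.linearIndependent_iff] at h ⊢
  intro g hg
  have h0 : g 0 = 0 := by
    have e := congrFun (congrFun hg ((0 : Fin 2), ⟨0, hd⟩)) ⟨0, hd⟩
    simp [Matrix.sum_apply, bigA, Fin.sum_univ_succ] at e
    exact e
  have hsum : ∑ k : Fin f, (fun k => g k.succ) k • B k = 0 := by
    ext p j
    have e := congrFun (congrFun hg ((1 : Fin 2), p)) j
    simp [Matrix.sum_apply, bigA, Fin.sum_univ_succ] at e
    simp only [Matrix.sum_apply, Matrix.smul_apply, smul_eq_mul, Matrix.zero_apply]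
    have e2 : (Real.sqrt 2 : ℂ)⁻¹ * ∑ k : Fin f, g k.succ * B k p j = 0 := by
      rw [Finset.mul_sum, ← e]
      exact Finset.sum_congr rfl fun k _ => by ring
    exact (mul_eq_zero.mp e2).resolve_left s2_ne
  intro k
  refine Fin.cases h0 (fun k' => ?_) k
  exact h (fun k => g k.succ) hsum k'

section entries
variable {d f : ℕ} (B : Fin f → Matrix (Fin d) (Fin d) ℂ) (ρ : Matrix (Fin d) (Fin d) ℂ)

lemma H1 (b b' : Fin d) :
    (krausMap (bigA B) ρ) ((0 : Fin 2), b) ((0 : Fin 2), b') = (2 : ℂ)⁻¹ * ρ b b' := by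
  simp [krausMap, Matrix.sum_apply, Fin.sum_univ_succ, bigA, Matrix.mul_apply,
    Matrix.conjTranspose_apply, ite_and, Finset.sum_ite_eq, s2_conj, apply_ite (starRingEnd ℂ),
    Finset.mul_sum, Finset.sum_mul, mul_comm, mul_assoc, mul_left_comm, s2_sq, s2_sq',
    mul_ite, ite_mul, Finset.sum_ite_eq']

lemma H2 (b b' : Fin d) :
    (krausMap (bigA B) ρ) ((1 : Fin 2), b) ((1 : Fin 2), b') =
      (2 : ℂ)⁻¹ * ∑ k, (B k * ρ * (B k)ᴴ) b b' := by
  simp [krausMap, Matrix.sum_apply, Fin.sum_univ_succ, bigA, Matrix.mul_apply,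
    Matrix.conjTranspose_apply, ite_and, Finset.sum_ite_eq, s2_conj, apply_ite (starRingEnd ℂ),
    Finset.mul_sum, Finset.sum_mul, mul_comm, mul_assoc, mul_left_comm, s2_sq, s2_sq',
    mul_ite, ite_mul, Finset.sum_ite_eq']

lemma H3 (b b' : Fin d) :
    (krausMap (bigA B) ρ) ((0 : Fin 2), b) ((1 : Fin 2), b') = 0 := by
  simp [krausMap, Matrix.sum_apply, Fin.sum_univ_succ, bigA, Matrix.mul_apply,
    Matrix.conjTranspose_apply, ite_and]

lemma H4 (b b' : Fin d) :
    (krausMap (bigA B) ρ) ((1 : Fin 2), b) ((0 : Fin 2), b') = 0 := by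
  simp [krausMap, Matrix.sum_apply, Fin.sum_univ_succ, bigA, Matrix.mul_apply,
    Matrix.conjTranspose_apply, ite_and]

end entries

section comp
variable {d f : ℕ} (B : Fin f → Matrix (Fin d) (Fin d) ℂ) (ρ : Matrix (Fin d) (Fin d) ℂ)

lemma T00 (p q : Fin 2 × Fin d) : (bigA B 0 * ρ * (bigA B 0)ᴴ) p q
    = if p.1 = 0 ∧ q.1 = 0 then (2 : ℂ)⁻¹ * ρ p.2 q.2 else 0 := by
  rcases p with ⟨a, b⟩; rcases q with ⟨c, e⟩
  fin_cases a <;> fin_cases c <;>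
  simp [bigA, Matrix.mul_apply, Matrix.conjTranspose_apply, ite_and, Finset.sum_ite_eq,
    s2_conj, apply_ite (starRingEnd ℂ), Finset.mul_sum, Finset.sum_mul,
    mul_comm, mul_assoc, mul_left_comm, s2_sq, s2_sq', mul_ite, ite_mul, Finset.sum_ite_eq']

lemma Tss (j k : Fin f) (p q : Fin 2 × Fin d) : (bigA B j.succ * ρ * (bigA B k.succ)ᴴ) p q
    = if p.1 = 1 ∧ q.1 = 1 then (2 : ℂ)⁻¹ * (B j * ρ * (B k)ᴴ) p.2 q.2 else 0 := by
  rcases p with ⟨a, b⟩; rcases q with ⟨c, e⟩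
  fin_cases a <;> fin_cases c <;>
  simp [bigA, Matrix.mul_apply, Matrix.conjTranspose_apply, ite_and, Finset.sum_ite_eq,
    s2_conj, apply_ite (starRingEnd ℂ), Finset.mul_sum, Finset.sum_mul,
    mul_comm, mul_assoc, mul_left_comm, s2_sq, s2_sq', mul_ite, ite_mul, Finset.sum_ite_eq']

lemma T0s (k : Fin f) (p : Fin 2 × Fin d) : (bigA B 0 * ρ * (bigA B k.succ)ᴴ) p p = 0 := by
  rcases p with ⟨a, b⟩
  fin_cases a <;>
  simp [bigA, Matrix.mul_apply, Matrix.conjTranspose_apply, ite_and,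
    apply_ite (starRingEnd ℂ), mul_ite, ite_mul]

lemma Ts0 (k : Fin f) (p : Fin 2 × Fin d) : (bigA B k.succ * ρ * (bigA B 0)ᴴ) p p = 0 := by
  rcases p with ⟨a, b⟩
  fin_cases a <;>
  simp [bigA, Matrix.mul_apply, Matrix.conjTranspose_apply, ite_and,
    apply_ite (starRingEnd ℂ), mul_ite, ite_mul]

lemma C00 : complementMap (bigA B) ρ 0 0 = (2 : ℂ)⁻¹ * ρ.trace := by
  show (bigA B 0 * ρ * (bigA B 0)ᴴ).trace = _
  simp [Matrix.trace, Matrix.diag, T00, Fintype.sum_prod_type, Fin.sum_univ_two,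
    Finset.mul_sum]

lemma C0s (k : Fin f) : complementMap (bigA B) ρ 0 k.succ = 0 := by
  show (bigA B 0 * ρ * (bigA B k.succ)ᴴ).trace = _
  simp [Matrix.trace, Matrix.diag, T0s]

lemma Cs0 (k : Fin f) : complementMap (bigA B) ρ k.succ 0 = 0 := by
  show (bigA B k.succ * ρ * (bigA B 0)ᴴ).trace = _
  simp [Matrix.trace, Matrix.diag, Ts0]

lemma Css (j k : Fin f) : complementMap (bigA B) ρ j.succ k.succ
    = (2 : ℂ)⁻¹ * (B j * ρ * (B k)ᴴ).trace := by
  show (bigA B j.succ * ρ * (bigA B k.succ)ᴴ).trace = _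
  simp [Matrix.trace, Matrix.diag, Tss, Fintype.sum_prod_type, Fin.sum_univ_two,
    Finset.mul_sum]

end comp

noncomputable def degKraus {d f : ℕ} (B : Fin f → Matrix (Fin d) (Fin d) ℂ) :
    (Fin d ⊕ Fin d) → Matrix (Fin (f + 1)) (Fin 2 × Fin d) ℂ :=
  Sum.elim
    (fun i => Matrix.single (0 : Fin (f + 1)) ((1 : Fin 2), i) 1)
    (fun m => Matrix.of fun j p =>
      if p.1 = 0 then (Fin.cases 0 (fun k => B k m p.2) j : ℂ) else 0)

section psi
variable {d f : ℕ} (B : Fin f → Matrix (Fin d) (Fin d) ℂ)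
  (σ : Matrix (Fin 2 × Fin d) (Fin 2 × Fin d) ℂ)

lemma Psi00 : krausMap (degKraus B) σ 0 0 = ∑ i, σ ((1 : Fin 2), i) ((1 : Fin 2), i) := by
  simp [krausMap, degKraus, Matrix.sum_apply, Fintype.sum_sum_type, Matrix.mul_apply,
    Matrix.conjTranspose_apply, Matrix.single, ite_and, Fintype.sum_prod_type,
    Fin.sum_univ_two, apply_ite (starRingEnd ℂ), mul_ite, ite_mul, Finset.sum_ite_eq,
    Finset.sum_ite_eq', Prod.ext_iff]

lemma Psi0s (k : Fin f) : krausMap (degKraus B) σ 0 k.succ = 0 := by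
  simp [krausMap, degKraus, Matrix.sum_apply, Fintype.sum_sum_type, Matrix.mul_apply,
    Matrix.conjTranspose_apply, Matrix.single, ite_and, Fintype.sum_prod_type,
    Fin.sum_univ_two, apply_ite (starRingEnd ℂ), mul_ite, ite_mul, Finset.sum_ite_eq,
    Finset.sum_ite_eq', Prod.ext_iff, Fin.succ_ne_zero]
  intro h; exact absurd h.symm (Fin.succ_ne_zero k)

lemma Psis0 (k : Fin f) : krausMap (degKraus B) σ k.succ 0 = 0 := by
  simp [krausMap, degKraus, Matrix.sum_apply, Fintype.sum_sum_type, Matrix.mul_apply,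
    Matrix.conjTranspose_apply, Matrix.single, ite_and, Fintype.sum_prod_type,
    Fin.sum_univ_two, apply_ite (starRingEnd ℂ), mul_ite, ite_mul, Finset.sum_ite_eq,
    Finset.sum_ite_eq', Prod.ext_iff, Fin.succ_ne_zero]
  intro h; exact absurd h.symm (Fin.succ_ne_zero k)

lemma Psiss (j k : Fin f) : krausMap (degKraus B) σ j.succ k.succ
    = ∑ m, ∑ b, ∑ b', B j m b * σ ((0 : Fin 2), b) ((0 : Fin 2), b') * star (B k m b') := by
  simp [krausMap, degKraus, Matrix.sum_apply, Fintype.sum_sum_type, Matrix.mul_apply,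
    Matrix.conjTranspose_apply, Matrix.single, ite_and, Fintype.sum_prod_type,
    Fin.sum_univ_two, apply_ite (starRingEnd ℂ), mul_ite, ite_mul, Finset.sum_ite_eq,
    Finset.sum_ite_eq', Prod.ext_iff, Fin.succ_ne_zero, Finset.mul_sum, Finset.sum_mul,
    mul_comm, mul_assoc, mul_left_comm]
  rw [if_neg fun h => Fin.succ_ne_zero j h.symm, zero_add]
  exact Finset.sum_congr rfl fun m _ => Finset.sum_comm

end psi

lemma trace_kraus_sum {n m ι : Type*} [Fintype n] [DecidableEq n] [Fintype m] [Fintype ι]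
    (A : ι → Matrix m n ℂ) (h : ∑ k, (A k)ᴴ * A k = 1) (ρ : Matrix n n ℂ) :
    ∑ k, (A k * ρ * (A k)ᴴ).trace = ρ.trace := by
  calc ∑ k, (A k * ρ * (A k)ᴴ).trace = ∑ k, ((A k)ᴴ * A k * ρ).trace := by
        refine Finset.sum_congr rfl fun k _ => ?_
        rw [Matrix.trace_mul_cycle]
  _ = ρ.trace := by rw [← Matrix.trace_sum, ← Finset.sum_mul, h, Matrix.one_mul]

lemma degKraus_sum {d f : ℕ} (B : Fin f → Matrix (Fin d) (Fin d) ℂ)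
    (hB : ∑ k, (B k)ᴴ * B k = 1) :
    ∑ α, (degKraus B α)ᴴ * degKraus B α = 1 := by
  have h2 : ∀ b e : Fin d, ∑ k : Fin f, ∑ m : Fin d, (starRingEnd ℂ) (B k m b) * B k m e
      = if b = e then (1 : ℂ) else 0 := by
    intro b e
    have h3 := congrFun (congrFun hB b) e
    simpa [Matrix.sum_apply, Matrix.mul_apply, Matrix.conjTranspose_apply,
      Matrix.one_apply] using h3
  have hz : ∀ k : Fin f, ((0 : Fin (f + 1)) = k.succ) ↔ False :=
    fun k => ⟨fun h => Fin.succ_ne_zero k h.symm, False.elim⟩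
  ext ⟨a, b⟩ ⟨c, e⟩
  simp only [Matrix.sum_apply, Fintype.sum_sum_type, degKraus, Sum.elim_inl, Sum.elim_inr,
    Matrix.mul_apply, Matrix.conjTranspose_apply, Matrix.of_apply, Matrix.one_apply,
    Matrix.single, Fin.sum_univ_succ, Fin.cases_zero, Fin.cases_succ]
  fin_cases a <;> fin_cases c <;>
    simp [ite_and, Prod.ext_iff, apply_ite (starRingEnd ℂ), mul_ite, ite_mul, hz,
      Finset.sum_ite_eq, Finset.sum_ite_eq', Finset.sum_comm (γ := Fin d), h2, eq_comm]

lemma deg_eq {d f : ℕ} (B : Fin f → Matrix (Fin d) (Fin d) ℂ)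
    (hB : ∑ k, (B k)ᴴ * B k = 1) :
    krausMap (degKraus B) ∘ₗ krausMap (bigA B) = complementMap (bigA B) := by
  apply LinearMap.ext; intro ρ
  ext j k
  rw [LinearMap.comp_apply]
  refine Fin.cases ?_ (fun j' => ?_) j
  · refine Fin.cases ?_ (fun k' => ?_) k
    · rw [Psi00, C00]
      simp only [H2]
      rw [← Finset.mul_sum]
      congr 1
      rw [Finset.sum_comm, ← trace_kraus_sum B hB ρ]
      exact Finset.sum_congr rfl fun k _ => by simp [Matrix.trace, Matrix.diag]
    · rw [Psi0s, C0s]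
  · refine Fin.cases ?_ (fun k' => ?_) k
    · rw [Psis0, Cs0]
    · rw [Psiss, Css]
      simp only [H1]
      simp only [Matrix.trace, Matrix.diag, Matrix.mul_apply, Matrix.conjTranspose_apply,
        Finset.mul_sum, Finset.sum_mul]
      refine Finset.sum_congr rfl fun m _ => ?_
      rw [Finset.sum_comm]
      refine Finset.sum_congr rfl fun x _ => ?_
      refine Finset.sum_congr rfl fun y _ => ?_
      simp only [RCLike.star_def]
      ring

section reindex
variable {n m m' E : Type*} [Fintype n] [DecidableEq n] [Fintype m] [Fintype m']
  [DecidableEq m] [DecidableEq m'] [Fintype E]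
variable (g : m' ≃ m)

lemma sub_conj_mul {ι : Type*} (A : ι → Matrix m n ℂ) (k : ι) :
    ((A k).submatrix g id)ᴴ * ((A k).submatrix g id) = (A k)ᴴ * A k := by
  ext i j
  rw [Matrix.mul_apply, Matrix.mul_apply]
  exact Fintype.sum_equiv g _ _ fun x => by
    simp [Matrix.conjTranspose_apply, Matrix.submatrix_apply]

lemma krausMap_sub {ι : Type*} [Fintype ι] (A : ι → Matrix m n ℂ) (ρ : Matrix n n ℂ) :
    krausMap (fun k => (A k).submatrix g id) ρ = (krausMap A ρ).submatrix g g := by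
  ext x y
  simp only [krausMap, LinearMap.coe_mk, AddHom.coe_mk, Matrix.sum_apply,
    Matrix.submatrix_apply]
  refine Finset.sum_congr rfl fun k _ => ?_
  simp [Matrix.mul_apply, Matrix.conjTranspose_apply, Matrix.submatrix_apply]

lemma complementMap_sub {ι : Type*} [Fintype ι] (A : ι → Matrix m n ℂ) :
    complementMap (fun k => (A k).submatrix g id) = complementMap A := by
  apply LinearMap.ext; intro ρ
  ext j k
  show Matrix.trace _ = Matrix.trace _
  rw [Matrix.trace, Matrix.trace]
  refine Fintype.sum_equiv g _ _ fun x => ?_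
  simp [Matrix.diag, Matrix.mul_apply, Matrix.conjTranspose_apply, Matrix.submatrix_apply]

lemma krausMap_sub_right {ι : Type*} [Fintype ι] (M : ι → Matrix E m ℂ)
    (σ : Matrix m m ℂ) :
    krausMap (fun α => (M α).submatrix id g) (σ.submatrix g g) = krausMap M σ := by
  ext x y
  simp only [krausMap, LinearMap.coe_mk, AddHom.coe_mk, Matrix.sum_apply]
  refine Finset.sum_congr rfl fun k _ => ?_
  simp only [Matrix.mul_apply, Matrix.conjTranspose_apply, Matrix.submatrix_apply, id_eq]
  rw [← Equiv.sum_comp g (fun b => _)]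
  refine Finset.sum_congr rfl fun b _ => ?_
  rw [Finset.sum_mul, Finset.sum_mul, ← Equiv.sum_comp g (fun c => _)]

lemma sub_right_conj {ι : Type*} [Fintype ι] (M : ι → Matrix E m ℂ)
    (h : ∑ α, (M α)ᴴ * M α = 1) :
    ∑ α, ((M α).submatrix id g)ᴴ * (M α).submatrix id g = 1 := by
  have : ∀ α, ((M α).submatrix id g)ᴴ * (M α).submatrix id g
      = ((M α)ᴴ * M α).submatrix g g := by
    intro α
    ext x y
    simp [Matrix.mul_apply, Matrix.conjTranspose_apply, Matrix.submatrix_apply]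
  rw [Finset.sum_congr rfl fun α _ => this α]
  have h2 : ∑ α, ((M α)ᴴ * M α).submatrix g g = (∑ α, (M α)ᴴ * M α).submatrix g g := by
    ext x y; simp [Matrix.sum_apply]
  rw [h2, h, Matrix.submatrix_one_equiv]

lemma li_sub {e : ℕ} (A : Fin e → Matrix m n ℂ) (h : LinearIndependent ℂ A) :
    LinearIndependent ℂ (fun k => (A k).submatrix g id) := by
  rw [Fintype.linearIndependent_iff] at h ⊢
  intro c hc
  refine h c ?_
  ext u v
  have := congrFun (congrFun hc (g.symm u)) v
  simpa [Matrix.sum_apply, Matrix.submatrix_apply] using this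

end reindex

section depol
variable (d : ℕ)

noncomputable def dEquiv : Fin (d ^ 2) ≃ Fin d × Fin d :=
  (finCongr (by ring : d ^ 2 = d * d)).trans finProdFinEquiv.symm

noncomputable def depol : Fin (d ^ 2) → Matrix (Fin d) (Fin d) ℂ :=
  fun k => (Real.sqrt d : ℂ)⁻¹ • Matrix.single (dEquiv d k).1 (dEquiv d k).2 1

lemma sd_mul (hd : 0 < d) :
    (starRingEnd ℂ) (Real.sqrt d : ℂ)⁻¹ * (Real.sqrt d : ℂ)⁻¹ = (d : ℂ)⁻¹ := by
  rw [map_inv₀, Complex.conj_ofReal, ← mul_inv, ← Complex.ofReal_mul,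
    Real.mul_self_sqrt (Nat.cast_nonneg d)]
  push_cast
  ring

lemma sd_ne (hd : 0 < d) : (Real.sqrt d : ℂ)⁻¹ ≠ 0 := by
  simp [Real.sqrt_eq_zero', Complex.ofReal_eq_zero]
  omega

lemma stdBasis_conjT {N : Type*} [DecidableEq N] (i j : N) :
    (Matrix.single i j (1 : ℂ))ᴴ = Matrix.single j i 1 := by
  ext a b
  simp [Matrix.conjTranspose_apply, Matrix.single, and_comm, apply_ite (starRingEnd ℂ)]

lemma sum_stdBasis_diag : ∑ j : Fin d, Matrix.single j j (1 : ℂ) = 1 := by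
  ext a b
  simp [Matrix.sum_apply, Matrix.single, Matrix.one_apply, ite_and,
    Finset.sum_ite_eq, eq_comm]

lemma depol_sum (hd : 0 < d) : ∑ k, (depol d k)ᴴ * depol d k = 1 := by
  rw [← Equiv.sum_comp (dEquiv d).symm (fun k => (depol d k)ᴴ * depol d k)]
  have h1 : ∀ p : Fin d × Fin d,
      (depol d ((dEquiv d).symm p))ᴴ * depol d ((dEquiv d).symm p)
      = (d : ℂ)⁻¹ • Matrix.single p.2 p.2 1 := by
    intro p
    simp only [depol, Equiv.apply_symm_apply, Matrix.conjTranspose_smul, Matrix.smul_mul,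
      Matrix.mul_smul, smul_smul, stdBasis_conjT, Matrix.single_mul_single_same, one_mul]
    rw [Complex.star_def, mul_comm, sd_mul d hd]
  rw [Finset.sum_congr rfl fun p _ => h1 p, ← Finset.smul_sum, Fintype.sum_prod_type]
  simp only [sum_stdBasis_diag, Finset.sum_const, Finset.card_univ, Fintype.card_fin]
  rw [← Nat.cast_smul_eq_nsmul ℂ, smul_smul,
    inv_mul_cancel₀ (Nat.cast_ne_zero.mpr hd.ne'), one_smul]

lemma depol_li (hd : 0 < d) : LinearIndependent ℂ (depol d) := by
  rw [Fintype.linearIndependent_iff]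
  intro c hc k
  have e := congrFun (congrFun hc (dEquiv d k).1) (dEquiv d k).2
  have e2 : ∑ k', c k' * depol d k' (dEquiv d k).1 (dEquiv d k).2 = 0 := by
    simpa [Matrix.sum_apply] using e
  rw [← Equiv.sum_comp (dEquiv d).symm
    (fun k' => c k' * depol d k' (dEquiv d k).1 (dEquiv d k).2)] at e2
  simp only [depol, Equiv.apply_symm_apply, Matrix.smul_apply, Matrix.single,
    Matrix.of_apply, smul_eq_mul, mul_ite, mul_one, mul_zero, ite_and,
    Fintype.sum_prod_type] at e2
  simp only [Finset.sum_ite_eq, Finset.mem_univ, if_true, Finset.sum_ite_irrel,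
    Finset.sum_const_zero, Finset.sum_ite_eq'] at e2
  rw [Prod.mk.eta, Equiv.symm_apply_apply] at e2
  rcases mul_eq_zero.mp e2 with h | h
  · exact h
  · exact absurd h (sd_ne d hd)

end depol

/-- there exist degradable channels whose Choi rank exceeds the output
dimension; specifically, if `N` on `M_d` (`d ≥ 3`) has Choi rank `d²` (a linearly
independent Kraus family of size `d²`), the flagged channel is degradable with output
dimension `2d` and Choi rank `d² + 1 > 2d`. -/
theorem degradable_with_large_environment :
    (∃ (a b : ℕ) (Φ : Matrix (Fin a) (Fin a) ℂ →ₗ[ℂ] Matrix (Fin b) (Fin b) ℂ),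
      IsCPTP Φ ∧ Degradable Φ ∧ b < (choi Φ).rank) ∧
    ∀ (d : ℕ), 3 ≤ d → ∀ B : Fin (d ^ 2) → Matrix (Fin d) (Fin d) ℂ,
      (∑ k, (B k)ᴴ * B k = 1) → LinearIndependent ℂ B →
      Degradable (krausMap (bigA B)) ∧
      (choi (krausMap (bigA B))).rank = d ^ 2 + 1 ∧
      2 * d < d ^ 2 + 1 := by
  constructor
  · have hB : ∑ k, (depol 3 k)ᴴ * depol 3 k = 1 := depol_sum 3 (by norm_num)
    have hLI : LinearIndependent ℂ (depol 3) := depol_li 3 (by norm_num)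
    set B := depol 3
    let g : Fin 6 ≃ Fin 2 × Fin 3 :=
      (finCongr (by norm_num : 6 = 2 * 3)).trans finProdFinEquiv.symm
    set A' : Fin (3 ^ 2 + 1) → Matrix (Fin 6) (Fin 3) ℂ :=
      fun k => (bigA B k).submatrix g id with hA'def
    have hA' : ∑ k, (A' k)ᴴ * A' k = 1 := by
      rw [Finset.sum_congr rfl fun k _ => sub_conj_mul g (bigA B) k]
      exact sum_conj_bigA B hB
    refine ⟨3, 6, krausMap A', isCPTP_krausMap A' hA', ?_, ?_⟩
    · refine ⟨3 ^ 2 + 1, A', ⟨fun ρ => rfl, hA'⟩,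
        krausMap (fun α => (degKraus B α).submatrix id g),
        isCPTP_krausMap _ (sub_right_conj g _ (degKraus_sum B hB)), ?_⟩
      apply LinearMap.ext; intro ρ
      rw [LinearMap.comp_apply, krausMap_sub g (bigA B) ρ,
        krausMap_sub_right g (degKraus B)]
      have h2 := LinearMap.congr_fun (deg_eq B hB) ρ
      rw [LinearMap.comp_apply] at h2
      rw [h2, ← complementMap_sub g (bigA B)]
    · rw [rank_choi_krausMap A' (li_sub g _ (bigA_linearIndependent (by norm_num) B hLI))]
      norm_num
  · intro d hd B hB hLI
    refine ⟨⟨d ^ 2 + 1, bigA B, ⟨fun ρ => rfl, sum_conj_bigA B hB⟩,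
      krausMap (degKraus B), isCPTP_krausMap _ (degKraus_sum B hB), deg_eq B hB⟩,
      rank_choi_krausMap _ (bigA_linearIndependent (by omega) B hLI), by nlinarith⟩
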